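/- Let N ≥ 2 and N/2 < K < N be integers. The map Φ : (ℤ/Kℤ) × ℰ_{N,K} → (ℤ/Nℤ) × Γ_{K,2K−N} defined by Φ(k,η) = (x_k(η) mod N, σ^{(k,η)}) is a bijection. -/

import Mathlib

open scoped Classical BigOperators

noncomputable section

/-- A particle configuration on the discrete circle `ℤ/Mℤ`. -/
abbrev Conf (M : ℕ) := ZMod M → Bool

/-- Number of occupied sites (particles) of a configuration. -/
def numParticles {M : ℕ} [NeZero M] (η : Conf M) : ℕ :=
  (Finset.univ.filter fun x => η x = true).card

/-- Ergodicity: every pair of neighbouring sites carries at least one particle. -/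
def isErgodic {M : ℕ} (η : Conf M) : Prop :=
  ∀ x : ZMod M, η x = true ∨ η (x + 1) = true

/-- The configuration `η` with the values at `x` and `y` exchanged. -/
def swapConf {α : Type*} [DecidableEq α] (η : α → Bool) (x y : α) : α → Bool :=
  fun z => if z = x then η y else if z = y then η x else η z

/-- The representative of `k ∈ ℤ/Kℤ` in `{1, …, K}`. -/
def repOne {K : ℕ} [NeZero K] (k : ZMod K) : ℕ :=
  if k.val = 0 then K else k.val

/-- `Σ_{y=1}^{x} η_y`, the number of particles among sites `1, …, x`. -/
def countUpTo {N : ℕ} (η : Conf N) (x : ℕ) : ℕ :=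
  ∑ y ∈ Finset.Icc 1 x, (if η ((y : ℕ) : ZMod N) = true then 1 else 0)

/-- `x_k(η) ∈ {1, …, N}`: the position of the `k`-th particle of `η`. -/
def pos {N K : ℕ} [NeZero K] (η : Conf N) (k : ZMod K) : ℕ :=
  sInf {x : ℕ | 1 ≤ x ∧ x ≤ N ∧ countUpTo η x = repOne k}

/-- The clockwise distance `d(a,b) ∈ {1, …, M}` from `a` to `b` on `ℤ/Mℤ`. -/
def cdist {M : ℕ} [NeZero M] (a b : ZMod M) : ℕ :=
  if (b - a).val = 0 then M else (b - a).val

/-- The (integer) value `σ^{(k,η)}_l = 2 − d(x_{k+l−1}(η), x_{k+l}(η))`. -/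
def sigmaVal {N K : ℕ} [NeZero N] [NeZero K] (η : Conf N) (k l : ZMod K) : ℤ :=
  2 - (cdist ((pos η (k + l - 1) : ℕ) : ZMod N) ((pos η (k + l) : ℕ) : ZMod N) : ℤ)

/-- The SSEP configuration `σ^{(k,η)}`, occupied at `l` iff `σ^{(k,η)}_l = 1`. -/
def sigmaConf {N K : ℕ} [NeZero N] [NeZero K] (η : Conf N) (k : ZMod K) : Conf K :=
  fun l => decide (cdist ((pos η (k + l - 1) : ℕ) : ZMod N) ((pos η (k + l) : ℕ) : ZMod N) = 1)

-- Part 1: natRep, repOne, countUpTo, posN basics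

/-- canonical representative in {1,…,M} of an element of ZMod M -/
def natRep {M : ℕ} [NeZero M] (z : ZMod M) : ℕ :=
  if z.val = 0 then M else z.val

section basics
variable {M : ℕ} [NeZero M]

lemma natRep_pos (z : ZMod M) : 1 ≤ natRep z := by
  unfold natRep; split <;> [exact (NeZero.pos M); omega]

lemma natRep_le (z : ZMod M) : natRep z ≤ M := by
  unfold natRep; split
  · exact le_rfl
  · exact le_of_lt (ZMod.val_lt z)

lemma natRep_cast (z : ZMod M) : ((natRep z : ℕ) : ZMod M) = z := by
  unfold natRep
  split
  case isTrue h =>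
    have hz : z = 0 := (ZMod.val_eq_zero z).mp h
    simp [hz]
  case isFalse h => rw [ZMod.natCast_val, ZMod.cast_id]

lemma cast_inj_Icc {a b : ℕ} (ha1 : 1 ≤ a) (haM : a ≤ M) (hb1 : 1 ≤ b) (hbM : b ≤ M)
    (h : ((a : ℕ) : ZMod M) = ((b : ℕ) : ZMod M)) : a = b := by
  have hmod := (ZMod.natCast_eq_natCast_iff' a b M).mp h
  have hA : a % M = a ∨ (a = M ∧ a % M = 0) := by
    rcases Nat.lt_or_ge a M with h' | h'
    · exact Or.inl (Nat.mod_eq_of_lt h')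
    · have : a = M := le_antisymm haM h'
      exact Or.inr ⟨this, by rw [this, Nat.mod_self]⟩
  have hB : b % M = b ∨ (b = M ∧ b % M = 0) := by
    rcases Nat.lt_or_ge b M with h' | h'
    · exact Or.inl (Nat.mod_eq_of_lt h')
    · have : b = M := le_antisymm hbM h'
      exact Or.inr ⟨this, by rw [this, Nat.mod_self]⟩
  omega

lemma natRep_cast_eq {x : ℕ} (h1 : 1 ≤ x) (h2 : x ≤ M) : natRep ((x : ℕ) : ZMod M) = x := by
  refine cast_inj_Icc (natRep_pos _) (natRep_le _) h1 h2 ?_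
  rw [natRep_cast]

end basics

section reps
variable {K : ℕ} [NeZero K]

lemma repOne_pos (k : ZMod K) : 1 ≤ repOne k := by
  unfold repOne; split <;> [exact NeZero.pos K; omega]

lemma repOne_le (k : ZMod K) : repOne k ≤ K := by
  unfold repOne; split
  · exact le_rfl
  · exact le_of_lt (ZMod.val_lt k)

lemma repOne_cast (k : ZMod K) : ((repOne k : ℕ) : ZMod K) = k := by
  have : repOne k = natRep k := rfl
  rw [this, natRep_cast]

lemma repOne_eq_of_cast {m : ℕ} {k : ZMod K} (h1 : 1 ≤ m) (h2 : m ≤ K)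
    (h : ((m : ℕ) : ZMod K) = k) : repOne k = m := by
  refine cast_inj_Icc (repOne_pos _) (repOne_le _) h1 h2 ?_
  rw [repOne_cast, h]

end reps
-- Part 2: countUpTo basics
section count
variable {N : ℕ} [NeZero N] (η : Conf N)

lemma countUpTo_zero : countUpTo η 0 = 0 := by
  simp [countUpTo]

lemma countUpTo_succ (x : ℕ) :
    countUpTo η (x + 1) = countUpTo η x + (if η (((x+1 : ℕ) : ZMod N)) = true then 1 else 0) := by
  unfold countUpTo
  rw [← Finset.sum_Icc_succ_top (by omega : 1 ≤ x + 1)]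

lemma countUpTo_succ_of_true {x : ℕ} (h : η (((x+1 : ℕ) : ZMod N)) = true) :
    countUpTo η (x + 1) = countUpTo η x + 1 := by
  rw [countUpTo_succ, if_pos h]

lemma countUpTo_succ_of_false {x : ℕ} (h : η (((x+1 : ℕ) : ZMod N)) = false) :
    countUpTo η (x + 1) = countUpTo η x := by
  rw [countUpTo_succ, if_neg (by rw [h]; simp), Nat.add_zero]

lemma countUpTo_mono : Monotone (countUpTo η) := by
  apply monotone_nat_of_le_succ
  intro n
  rw [countUpTo_succ]
  omega

lemma countUpTo_le_succ (x : ℕ) : countUpTo η (x + 1) ≤ countUpTo η x + 1 := by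
  rw [countUpTo_succ]; split <;> omega

/-- the total count is the number of particles -/
lemma countUpTo_total : countUpTo η N = numParticles η := by
  unfold countUpTo numParticles
  rw [Finset.card_filter]
  refine Finset.sum_nbij' (fun y => ((y : ℕ) : ZMod N)) (fun z => natRep z) ?_ ?_ ?_ ?_ ?_
  · intro y _; exact Finset.mem_univ _
  · intro z _
    simp only [Finset.mem_Icc]
    exact ⟨natRep_pos z, natRep_le z⟩
  · intro y hy
    simp only [Finset.mem_Icc] at hy
    exact natRep_cast_eq hy.1 hy.2
  · intro z _; exact natRep_cast z
  · intro y _; rfl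

lemma countUpTo_stretch {a b : ℕ} (hab : a ≤ b)
    (h : ∀ t, a < t → t ≤ b → η ((t : ℕ) : ZMod N) = false) :
    countUpTo η b = countUpTo η a := by
  induction b with
  | zero =>
    have ha : a = 0 := by omega
    rw [ha]
  | succ n ih =>
    rcases Nat.lt_or_ge a (n + 1) with hlt | hge
    · have han : a ≤ n := by omega
      rw [countUpTo_succ_of_false η (h (n+1) (by omega) le_rfl)]
      exact ih han (fun t ht1 ht2 => h t ht1 (by omega))
    · have : a = n + 1 := by omega
      rw [this]

lemma exists_countUpTo (m n : ℕ) (h : m ≤ countUpTo η n) : ∃ x ≤ n, countUpTo η x = m := by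
  induction n with
  | zero =>
    rw [countUpTo_zero] at h
    exact ⟨0, le_rfl, by rw [countUpTo_zero]; omega⟩
  | succ n ih =>
    rcases Nat.lt_or_ge (countUpTo η n) m with hlt | hge
    · have h1 := countUpTo_le_succ η n
      exact ⟨n + 1, le_rfl, by omega⟩
    · obtain ⟨x, hx1, hx2⟩ := ih hge
      exact ⟨x, by omega, hx2⟩

end count
-- Part 3: posN and pos
/-- position of the m-th particle, m ∈ {1,…,K} -/
def posN {N : ℕ} (η : Conf N) (m : ℕ) : ℕ :=
  sInf {x : ℕ | 1 ≤ x ∧ x ≤ N ∧ countUpTo η x = m}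

lemma pos_eq_posN {N K : ℕ} [NeZero K] (η : Conf N) (k : ZMod K) :
    pos η k = posN η (repOne k) := rfl

section posn
variable {N K : ℕ} [NeZero N] [NeZero K] {η : Conf N} (hη : numParticles η = K)

include hη

lemma posN_spec {m : ℕ} (hm1 : 1 ≤ m) (hm2 : m ≤ K) :
    1 ≤ posN η m ∧ posN η m ≤ N ∧ countUpTo η (posN η m) = m := by
  have hne : {x : ℕ | 1 ≤ x ∧ x ≤ N ∧ countUpTo η x = m}.Nonempty := by
    obtain ⟨x, hx1, hx2⟩ := exists_countUpTo η m N (by rw [countUpTo_total, hη]; exact hm2)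
    refine ⟨x, ?_, hx1, hx2⟩
    by_contra h
    have : x = 0 := by omega
    rw [this, countUpTo_zero] at hx2; omega
  exact Nat.sInf_mem hne

lemma posN_particle {m : ℕ} (hm1 : 1 ≤ m) (hm2 : m ≤ K) :
    η (((posN η m : ℕ) : ZMod N)) = true := by
  obtain ⟨h1, h2, h3⟩ := posN_spec hη hm1 hm2
  set p := posN η m with hp
  have hlt : p - 1 < p := by omega
  have hnot : ¬ (1 ≤ p - 1 ∧ p - 1 ≤ N ∧ countUpTo η (p-1) = m) := fun hmem =>
    Nat.notMem_of_lt_sInf hlt hmem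
  have hne : countUpTo η (p - 1) ≠ m := by
    intro heq
    rcases Nat.eq_zero_or_pos (p-1) with h0 | hpos
    · rw [h0, countUpTo_zero] at heq; omega
    · exact hnot ⟨hpos, by omega, heq⟩
  have hsucc := countUpTo_succ η (p - 1)
  have hps : p - 1 + 1 = p := by omega
  rw [hps] at hsucc
  by_contra hfalse
  have : η ((p : ℕ) : ZMod N) = false := by
    simpa using hfalse
  rw [this] at hsucc
  simp at hsucc
  omega

/-- a particle has a well-defined label -/
lemma particle_label {x : ℕ} (hx1 : 1 ≤ x) (hx2 : x ≤ N) (hx : η ((x : ℕ) : ZMod N) = true) :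
    1 ≤ countUpTo η x ∧ countUpTo η x ≤ K ∧ posN η (countUpTo η x) = x := by
  have hxs : x - 1 + 1 = x := by omega
  have hstep : countUpTo η x = countUpTo η (x-1) + 1 := by
    have := countUpTo_succ_of_true η (x := x - 1) (by rw [hxs]; exact hx)
    rwa [hxs] at this
  have h1 : 1 ≤ countUpTo η x := by omega
  have h2 : countUpTo η x ≤ K := by
    have := countUpTo_mono η (show x ≤ N from hx2)
    rw [countUpTo_total, hη] at this
    exact this
  refine ⟨h1, h2, ?_⟩
  have hmem : x ∈ {w : ℕ | 1 ≤ w ∧ w ≤ N ∧ countUpTo η w = countUpTo η x} := ⟨hx1, hx2, rfl⟩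
  have hle : posN η (countUpTo η x) ≤ x := Nat.sInf_le hmem
  obtain ⟨g1, g2, g3⟩ := posN_spec hη h1 h2
  by_contra hne
  have hlt : posN η (countUpTo η x) < x := by omega
  have : countUpTo η (posN η (countUpTo η x)) ≤ countUpTo η (x - 1) :=
    countUpTo_mono η (by omega)
  omega

/-- the particles of η are exactly the positions -/
lemma particle_iff (z : ZMod N) :
    η z = true ↔ ∃ j : ZMod K, z = ((pos η j : ℕ) : ZMod N) := by
  constructor
  · intro hz
    set x := natRep z with hxdef
    have hx1 := natRep_pos z
    have hx2 := natRep_le z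
    have hcast : ((x : ℕ) : ZMod N) = z := natRep_cast z
    have hx : η ((x : ℕ) : ZMod N) = true := by rw [hcast]; exact hz
    obtain ⟨h1, h2, h3⟩ := particle_label hη hx1 hx2 hx
    refine ⟨((countUpTo η x : ℕ) : ZMod K), ?_⟩
    rw [pos_eq_posN, repOne_eq_of_cast h1 h2 rfl, h3, hcast]
  · rintro ⟨j, rfl⟩
    rw [pos_eq_posN]
    exact posN_particle hη (repOne_pos j) (repOne_le j)

end posn
-- Part 4: the STEP lemma
section step
variable {N K : ℕ} [NeZero N] [NeZero K] {η : Conf N} (hη : numParticles η = K)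

include hη

lemma step_label {x x' d : ℕ} (hx1 : 1 ≤ x) (hx2 : x ≤ N)
    (hx'1 : 1 ≤ x') (hx'2 : x' ≤ N) (hd1 : 1 ≤ d) (hd2 : d ≤ N)
    (hcast : ((x' : ℕ) : ZMod N) = ((x : ℕ) : ZMod N) + ((d : ℕ) : ZMod N))
    (hpart : η ((x' : ℕ) : ZMod N) = true)
    (hempty : ∀ t, 1 ≤ t → t < d → η (((x + t : ℕ) : ZMod N)) = false) :
    ((countUpTo η x' : ℕ) : ZMod K) = ((countUpTo η x : ℕ) : ZMod K) + 1 := by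
  rcases le_or_gt (x + d) N with hle | hgt
  · -- no wrap : x' = x + d
    have hxd : x' = x + d := by
      refine cast_inj_Icc hx'1 hx'2 (by omega) hle ?_
      rw [hcast]; push_cast; ring
    have hstretch : countUpTo η (x + d - 1) = countUpTo η x := by
      refine countUpTo_stretch η (by omega) ?_
      intro t ht1 ht2
      have := hempty (t - x) (by omega) (by omega)
      rwa [show x + (t - x) = t by omega] at this
    have hsucc : countUpTo η (x + d) = countUpTo η (x + d - 1) + 1 := by
      have h' := countUpTo_succ_of_true η (x := x + d - 1)
        (by rw [show x + d - 1 + 1 = x + d by omega, ← hxd]; exact hpart)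
      rwa [show x + d - 1 + 1 = x + d by omega] at h'
    rw [hxd, hsucc, hstretch]
    push_cast; ring
  · -- wrap : x' = x + d - N
    have hxd : x' = x + d - N := by
      refine cast_inj_Icc hx'1 hx'2 (by omega) (by omega) ?_
      have : ((x + d - N : ℕ) : ZMod N) = ((x + d : ℕ) : ZMod N) := by
        have hNdvd : ((N : ℕ) : ZMod N) = 0 := ZMod.natCast_self N
        calc ((x + d - N : ℕ) : ZMod N)
            = (((x + d - N) + N : ℕ) : ZMod N) := by push_cast [hNdvd]; ring
          _ = ((x + d : ℕ) : ZMod N) := by rw [show x + d - N + N = x + d by omega]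
      rw [hcast, this]; push_cast; ring
    -- sites above x are empty
    have htop : countUpTo η N = countUpTo η x := by
      refine countUpTo_stretch η hx2 ?_
      intro t ht1 ht2
      have := hempty (t - x) (by omega) (by omega)
      rwa [show x + (t - x) = t by omega] at this
    have hcxK : countUpTo η x = K := by
      rw [← htop, countUpTo_total, hη]
    -- sites below x' are empty
    have hbot : countUpTo η (x' - 1) = 0 := by
      rw [← countUpTo_zero η]
      refine countUpTo_stretch η (by omega) ?_
      intro t ht1 ht2
      have hteq : x + (t + N - x) = t + N := by omega
      have := hempty (t + N - x) (by omega) (by omega)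
      rw [hteq] at this
      have hcast2 : ((t + N : ℕ) : ZMod N) = ((t : ℕ) : ZMod N) := by
        push_cast [ZMod.natCast_self N]; ring
      rwa [hcast2] at this
    have hcx' : countUpTo η x' = 1 := by
      have h' := countUpTo_succ_of_true η (x := x' - 1)
        (by rw [show x' - 1 + 1 = x' by omega]; exact hpart)
      rw [show x' - 1 + 1 = x' by omega] at h'
      omega
    rw [hcx', hcxK]
    simp [ZMod.natCast_self K]

end step
-- Part 5: the NEXT lemma and gap structure
section next
variable {N K : ℕ} [NeZero N] [NeZero K] {η : Conf N} (hη : numParticles η = K)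

/-- gap to next particle, as used in `sigmaConf` -/
def gapD (η : Conf N) (j : ZMod K) : ℕ :=
  cdist ((pos η j : ℕ) : ZMod N) ((pos η (j + 1) : ℕ) : ZMod N)

omit hη in
lemma gapD_pos (j : ZMod K) : 1 ≤ gapD η j := by
  unfold gapD cdist
  split
  · exact NeZero.pos N
  · omega

omit hη in
lemma cast_add_gapD (j : ZMod K) :
    ((pos η (j + 1) : ℕ) : ZMod N) = ((pos η j : ℕ) : ZMod N) + ((gapD η j : ℕ) : ZMod N) := by
  unfold gapD cdist
  split
  case isTrue h =>
    have h0 : ((pos η (j+1) : ℕ) : ZMod N) - ((pos η j : ℕ) : ZMod N) = 0 :=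
      (ZMod.val_eq_zero _).mp h
    have : ((pos η (j+1) : ℕ) : ZMod N) = ((pos η j : ℕ) : ZMod N) := by
      have := sub_eq_zero.mp h0; exact this
    rw [this, ZMod.natCast_self]; ring
  case isFalse h =>
    rw [ZMod.natCast_val, ZMod.cast_id]
    ring

include hη

/-- key structure lemma: the gap is the distance to the *next* particle -/
lemma gapD_eq_next (j : ZMod K) :
    gapD η j = sInf {t : ℕ | 1 ≤ t ∧ η (((pos η j : ℕ) : ZMod N) + ((t : ℕ) : ZMod N)) = true} ∧
    (∀ t, 1 ≤ t → t < gapD η j →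
      η (((pos η j : ℕ) : ZMod N) + ((t : ℕ) : ZMod N)) = false) := by
  set x := pos η j with hxdef
  obtain ⟨hx1, hx2, hcx⟩ : 1 ≤ x ∧ x ≤ N ∧ countUpTo η x = repOne j := by
    rw [hxdef, pos_eq_posN]
    exact posN_spec hη (repOne_pos j) (repOne_le j)
  have hxp : η ((x : ℕ) : ZMod N) = true := by
    rw [hxdef, pos_eq_posN]
    exact posN_particle hη (repOne_pos j) (repOne_le j)
  set S := {t : ℕ | 1 ≤ t ∧ η (((x : ℕ) : ZMod N) + ((t : ℕ) : ZMod N)) = true} with hS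
  have hNS : N ∈ S := by
    refine ⟨NeZero.pos N, ?_⟩
    rw [ZMod.natCast_self]
    simpa using hxp
  have hSne : S.Nonempty := ⟨N, hNS⟩
  set u := sInf S with hu
  obtain ⟨hu1, hup⟩ : 1 ≤ u ∧ η (((x : ℕ) : ZMod N) + ((u : ℕ) : ZMod N)) = true :=
    Nat.sInf_mem hSne
  have huN : u ≤ N := Nat.sInf_le hNS
  have humin : ∀ t, 1 ≤ t → t < u → η (((x : ℕ) : ZMod N) + ((t : ℕ) : ZMod N)) = false := by
    intro t ht1 ht2
    have : t ∉ S := Nat.notMem_of_lt_sInf ht2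
    rw [hS, Set.mem_setOf_eq] at this
    push_neg at this
    cases hb : η (((x : ℕ) : ZMod N) + ((t : ℕ) : ZMod N))
    · rfl
    · exact absurd hb (this ht1)
  -- let x' be the representative of the next particle
  set x' := natRep (((x : ℕ) : ZMod N) + ((u : ℕ) : ZMod N)) with hx'def
  have hx'1 := natRep_pos (((x : ℕ) : ZMod N) + ((u : ℕ) : ZMod N))
  have hx'2 := natRep_le (((x : ℕ) : ZMod N) + ((u : ℕ) : ZMod N))
  have hx'cast : ((x' : ℕ) : ZMod N) = ((x : ℕ) : ZMod N) + ((u : ℕ) : ZMod N) :=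
    natRep_cast _
  have hx'p : η ((x' : ℕ) : ZMod N) = true := by rw [hx'cast]; exact hup
  -- empties rephrased
  have hempty : ∀ t, 1 ≤ t → t < u → η (((x + t : ℕ) : ZMod N)) = false := by
    intro t ht1 ht2
    have := humin t ht1 ht2
    rwa [show ((x + t : ℕ) : ZMod N) = ((x : ℕ) : ZMod N) + ((t : ℕ) : ZMod N) by push_cast; ring]
  have hstep := step_label hη hx1 hx2 hx'1 hx'2 hu1 huN hx'cast hx'p hempty
  -- identify pos η (j+1) with x'
  obtain ⟨hl1, hl2, hl3⟩ := particle_label hη hx'1 hx'2 hx'p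
  have hcastj : ((countUpTo η x' : ℕ) : ZMod K) = j + 1 := by
    rw [hstep]
    rw [show ((countUpTo η x : ℕ) : ZMod K) = ((repOne j : ℕ) : ZMod K) by rw [hcx]]
    rw [repOne_cast]
  have hrep : repOne (j + 1) = countUpTo η x' := repOne_eq_of_cast hl1 hl2 hcastj
  have hposx' : pos η (j + 1) = x' := by
    rw [pos_eq_posN, hrep, hl3]
  -- compute gapD
  have hgap : gapD η j = u := by
    unfold gapD cdist
    rw [hposx', ← hxdef, hx'cast]
    have hsub : ((x : ℕ) : ZMod N) + ((u : ℕ) : ZMod N) - ((x : ℕ) : ZMod N)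
        = ((u : ℕ) : ZMod N) := by ring
    rw [hsub]
    rcases Nat.lt_or_ge u N with hlt | hge
    · rw [ZMod.val_cast_of_lt hlt]
      split
      · omega
      · rfl
    · have huN' : u = N := by omega
      rw [huN', ZMod.natCast_self]
      simp
  exact ⟨by rw [hgap], by rw [hgap]; exact humin⟩

/-- ergodicity bounds the gaps by 2 -/
lemma gapD_le_two (herg : isErgodic η) (j : ZMod K) : gapD η j ≤ 2 := by
  obtain ⟨-, hmin⟩ := gapD_eq_next hη j
  by_contra hgt
  push_neg at hgt
  have h1 := hmin 1 le_rfl (by omega)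
  have h2 := hmin 2 (by omega) (by omega)
  rcases herg (((pos η j : ℕ) : ZMod N) + 1) with h | h
  · rw [show ((pos η j : ℕ) : ZMod N) + 1 = ((pos η j : ℕ) : ZMod N) + ((1 : ℕ) : ZMod N)
      by push_cast; ring] at h
    rw [h1] at h; exact absurd h (by simp)
  · rw [show ((pos η j : ℕ) : ZMod N) + 1 + 1 = ((pos η j : ℕ) : ZMod N) + ((2 : ℕ) : ZMod N)
      by push_cast; ring] at h
    rw [h2] at h; exact absurd h (by simp)

omit hη in
/-- the gaps sum to a multiple of N -/
lemma sum_gapD_dvd : N ∣ ∑ j : ZMod K, gapD η j := by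
  rw [← ZMod.natCast_eq_zero_iff]
  push_cast
  have htel : ∑ j : ZMod K, ((gapD η j : ℕ) : ZMod N)
      = ∑ j : ZMod K, (((pos η (j+1) : ℕ) : ZMod N) - ((pos η j : ℕ) : ZMod N)) := by
    refine Finset.sum_congr rfl fun j _ => ?_
    rw [cast_add_gapD]; ring
  rw [htel, Finset.sum_sub_distrib]
  have : ∑ j : ZMod K, ((pos η (j+1) : ℕ) : ZMod N) = ∑ j : ZMod K, ((pos η j : ℕ) : ZMod N) :=
    Fintype.sum_equiv (Equiv.addRight (1 : ZMod K)) _ _ (fun j => rfl)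
  rw [this, sub_self]

include hη in
/-- for an ergodic configuration, the gaps sum exactly to N -/
lemma sum_gapD_eq (herg : isErgodic η) (h1 : N < 2 * K) (h2 : K < N) :
    ∑ j : ZMod K, gapD η j = N := by
  have hdvd := sum_gapD_dvd (η := η) (K := K)
  have hlow : K ≤ ∑ j : ZMod K, gapD η j := by
    calc K = ∑ _j : ZMod K, 1 := by simp [ZMod.card K]
    _ ≤ ∑ j : ZMod K, gapD η j := Finset.sum_le_sum fun j _ => gapD_pos j
  have hhigh : ∑ j : ZMod K, gapD η j ≤ 2 * K := by
    calc ∑ j : ZMod K, gapD η j ≤ ∑ _j : ZMod K, 2 :=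
        Finset.sum_le_sum fun j _ => gapD_le_two hη herg j
    _ = 2 * K := by simp [ZMod.card K]; ring
  obtain ⟨c, hc⟩ := hdvd
  have hK0 : 1 ≤ K := NeZero.pos K
  have hc1 : c = 1 := by nlinarith
  rw [hc, hc1, mul_one]

include hη in
/-- number of gaps equal to 1 -/
lemma card_gapD_one (herg : isErgodic η) (h1 : N < 2 * K) (h2 : K < N) :
    (Finset.univ.filter fun j : ZMod K => gapD η j = 1).card = 2 * K - N := by
  have hsum := sum_gapD_eq hη herg h1 h2
  have hkey : ∑ j : ZMod K, (gapD η j + (if gapD η j = 1 then 1 else 0)) = 2 * K := by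
    have : ∀ j : ZMod K, gapD η j + (if gapD η j = 1 then 1 else 0) = 2 := by
      intro j
      have hp := gapD_pos (η := η) j
      have hl := gapD_le_two hη herg j
      interval_cases h : gapD η j <;> simp
    rw [Finset.sum_congr rfl fun j _ => this j]
    simp [ZMod.card K]; ring
  rw [Finset.sum_add_distrib, hsum] at hkey
  rw [Finset.card_filter]
  omega

end next
-- Part 6: forward MapsTo
section fwd
variable {N K : ℕ} [NeZero N] [NeZero K] {η : Conf N} (hη : numParticles η = K)

omit hη in
lemma sigmaConf_eq_gapD (k l : ZMod K) :
    sigmaConf η k l = decide (gapD η (k + l - 1) = 1) := by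
  unfold sigmaConf gapD
  rw [show k + l - 1 + 1 = k + l by ring]

include hη in
lemma numParticles_sigmaConf (herg : isErgodic η) (h1 : N < 2 * K) (h2 : K < N) (k : ZMod K) :
    numParticles (sigmaConf η k) = 2 * K - N := by
  rw [← card_gapD_one hη herg h1 h2]
  unfold numParticles
  refine Finset.card_nbij' (fun l => k + l - 1) (fun j => j + 1 - k) ?_ ?_ ?_ ?_
  · intro l hl
    simp only [Finset.coe_filter, Set.mem_setOf_eq, Finset.mem_filter, Finset.mem_univ, true_and] at hl ⊢
    rw [sigmaConf_eq_gapD] at hl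
    exact of_decide_eq_true hl
  · intro j hj
    simp only [Finset.coe_filter, Set.mem_setOf_eq, Finset.mem_filter, Finset.mem_univ, true_and] at hj ⊢
    rw [sigmaConf_eq_gapD, show k + (j + 1 - k) - 1 = j by ring]
    exact decide_eq_true hj
  · intro l _; ring
  · intro j _; ring

end fwd
-- Part 7: inverse construction
section inv
variable {N K : ℕ} [NeZero N] [NeZero K]

/-- gap sequence determined by a SSEP configuration -/
def gapS (σ : Conf K) (j : ℕ) : ℕ := if σ ((j : ℕ) : ZMod K) = true then 1 else 2

/-- accumulated gaps -/
def sAcc (σ : Conf K) (l : ℕ) : ℕ := ∑ j ∈ Finset.range l, gapS σ (j + 1)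

/-- reconstructed FEP configuration -/
def invConf (y : ZMod N) (σ : Conf K) : Conf N :=
  fun z => decide (∃ l, l < K ∧ z = y + ((sAcc σ l : ℕ) : ZMod N))

variable {σ : Conf K}

lemma gapS_pos (j : ℕ) : 1 ≤ gapS σ j := by unfold gapS; split <;> omega

lemma gapS_le (j : ℕ) : gapS σ j ≤ 2 := by unfold gapS; split <;> omega

lemma sAcc_zero : sAcc σ 0 = 0 := by simp [sAcc]

lemma sAcc_succ (l : ℕ) : sAcc σ (l + 1) = sAcc σ l + gapS σ (l + 1) := by
  unfold sAcc; rw [Finset.sum_range_succ]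

lemma sAcc_strictMono : StrictMono (sAcc σ) := by
  apply strictMono_nat_of_lt_succ
  intro n
  rw [sAcc_succ]
  have := gapS_pos (σ := σ) (n + 1)
  omega

lemma sAcc_total (hσ : numParticles σ = 2 * K - N) (h1 : N < 2 * K) : sAcc σ K = N := by
  have hkey : sAcc σ K + ∑ j ∈ Finset.range K, (if σ (((j+1 : ℕ) : ZMod K)) = true then 1 else 0)
      = 2 * K := by
    unfold sAcc
    rw [← Finset.sum_add_distrib]
    have : ∀ j ∈ Finset.range K,
        gapS σ (j+1) + (if σ (((j+1 : ℕ) : ZMod K)) = true then 1 else 0) = 2 := by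
      intro j _
      unfold gapS
      split <;> simp_all
    rw [Finset.sum_congr rfl this]
    simp [Finset.sum_const, Finset.card_range]; ring
  have hcnt : ∑ j ∈ Finset.range K, (if σ (((j+1 : ℕ) : ZMod K)) = true then 1 else 0)
      = numParticles σ := by
    unfold numParticles
    rw [Finset.card_filter]
    refine Finset.sum_nbij' (fun j => (((j+1 : ℕ) : ZMod K))) (fun z => (z - 1).val) ?_ ?_ ?_ ?_ ?_
    · intro j _; exact Finset.mem_univ _
    · intro z _; simp only [Finset.mem_range]; exact ZMod.val_lt _
    · intro j hj
      simp only [Finset.mem_range] at hj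
      push_cast
      ring_nf
      exact ZMod.val_cast_of_lt hj
    · intro z _
      push_cast
      rw [ZMod.natCast_val, ZMod.cast_id]
      ring
    · intro j _; rfl
  rw [hcnt, hσ] at hkey
  omega

lemma sAcc_lt (hσ : numParticles σ = 2 * K - N) (h1 : N < 2 * K) {l : ℕ} (hl : l < K) :
    sAcc σ l < N := by
  rw [← sAcc_total hσ h1]
  exact sAcc_strictMono hl

lemma invConf_true_iff (y : ZMod N) (z : ZMod N) :
    invConf y σ z = true ↔ ∃ l, l < K ∧ z = y + ((sAcc σ l : ℕ) : ZMod N) := by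
  unfold invConf
  exact decide_eq_true_iff

lemma numParticles_invConf (hσ : numParticles σ = 2 * K - N) (h1 : N < 2 * K) (y : ZMod N) :
    numParticles (invConf y σ) = K := by
  unfold numParticles
  have hset : (Finset.univ.filter fun z => invConf y σ z = true)
      = (Finset.range K).image (fun l => y + ((sAcc σ l : ℕ) : ZMod N)) := by
    ext z
    simp only [Finset.mem_filter, Finset.mem_univ, true_and, Finset.mem_image, Finset.mem_range]
    rw [invConf_true_iff]
    constructor
    · rintro ⟨l, hl, rfl⟩; exact ⟨l, hl, rfl⟩
    · rintro ⟨l, hl, rfl⟩; exact ⟨l, hl, rfl⟩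
  rw [hset, Finset.card_image_of_injOn, Finset.card_range]
  intro a ha b hb hab
  simp only [Finset.coe_range, Set.mem_Iio] at ha hb
  have : ((sAcc σ a : ℕ) : ZMod N) = ((sAcc σ b : ℕ) : ZMod N) := by
    have := add_left_cancel hab
    exact this
  have hva := ZMod.val_cast_of_lt (sAcc_lt hσ h1 ha)
  have hvb := ZMod.val_cast_of_lt (sAcc_lt hσ h1 hb)
  have : sAcc σ a = sAcc σ b := by rw [← hva, ← hvb, this]
  exact sAcc_strictMono.injective this

/-- the site right after a gap-2 particle is empty -/
lemma invConf_gap_empty (hσ : numParticles σ = 2 * K - N) (h1 : N < 2 * K) (y : ZMod N)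
    {l : ℕ} (hl : l < K) (hg : gapS σ (l + 1) = 2) :
    invConf y σ (y + ((sAcc σ l : ℕ) : ZMod N) + 1) = false := by
  cases hb : invConf y σ (y + ((sAcc σ l : ℕ) : ZMod N) + 1)
  · rfl
  · exfalso
    rw [invConf_true_iff] at hb
    obtain ⟨l', hl', heq⟩ := hb
    have hc : ((sAcc σ l + 1 : ℕ) : ZMod N) = ((sAcc σ l' : ℕ) : ZMod N) := by
      push_cast
      linear_combination heq
    rcases Nat.lt_or_ge (sAcc σ l + 1) N with hlt | hge
    · have hval : sAcc σ l + 1 = sAcc σ l' := by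
        have hva := ZMod.val_cast_of_lt hlt
        have hvb := ZMod.val_cast_of_lt (sAcc_lt hσ h1 hl')
        rw [← hva, ← hvb, hc]
      rcases Nat.lt_or_ge l' (l + 1) with hc1 | hc1
      · have : sAcc σ l' ≤ sAcc σ l := sAcc_strictMono.monotone (by omega)
        omega
      · have : sAcc σ l + 2 ≤ sAcc σ l' := by
          have h2 := sAcc_succ (σ := σ) l
          have : sAcc σ (l+1) ≤ sAcc σ l' := sAcc_strictMono.monotone hc1
          omega
        omega
    · -- sAcc l + 1 = N, so sAcc l' ≡ 0, hence l' = 0 and then contradiction with monotonicity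
      have hEq : sAcc σ l + 1 = N := by
        have := sAcc_lt hσ h1 hl; omega
      have h0 : ((sAcc σ l' : ℕ) : ZMod N) = 0 := by rw [← hc, hEq, ZMod.natCast_self]
      have hval : sAcc σ l' = 0 := by
        have := ZMod.val_cast_of_lt (sAcc_lt hσ h1 hl')
        rw [h0] at this
        simpa using this.symm
      have hl'0 : l' = 0 := by
        by_contra hne
        have : sAcc σ 0 < sAcc σ l' := sAcc_strictMono (by omega)
        rw [sAcc_zero] at this; omega
      -- then sAcc (l+1) = sAcc l + 2 = N + 1 > N = sAcc K, but l + 1 ≤ K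
      have : sAcc σ (l + 1) ≤ sAcc σ K := sAcc_strictMono.monotone (by omega)
      rw [sAcc_total hσ h1] at this
      rw [sAcc_succ, hg] at this
      omega

/-- bracket: every distance is within 1 after some accumulated gap -/
lemma sAcc_bracket (hσ : numParticles σ = 2 * K - N) (h1 : N < 2 * K) {d : ℕ} (hd : d < N) :
    ∃ l, l < K ∧ (d = sAcc σ l ∨ d = sAcc σ l + 1) := by
  have key : ∀ n, sAcc σ 0 ≤ d → d < sAcc σ n → ∃ l, l < n ∧ sAcc σ l ≤ d ∧ d < sAcc σ (l+1) := by
    intro n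
    induction n with
    | zero => intro h0 hn; rw [sAcc_zero] at *; omega
    | succ n ih =>
      intro h0 hn
      rcases Nat.lt_or_ge d (sAcc σ n) with hlt | hge
      · obtain ⟨l, hl, h⟩ := ih h0 hlt
        exact ⟨l, by omega, h⟩
      · exact ⟨n, by omega, hge, hn⟩
  obtain ⟨l, hl, hle, hlt⟩ := key K (by rw [sAcc_zero]; omega) (by rw [sAcc_total hσ h1]; omega)
  have := sAcc_succ (σ := σ) l
  have := gapS_le (σ := σ) (l + 1)
  exact ⟨l, hl, by omega⟩

lemma invConf_ergodic (hσ : numParticles σ = 2 * K - N) (h1 : N < 2 * K) (y : ZMod N) :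
    isErgodic (invConf y σ) := by
  intro z
  set d := (z + 1 - y).val with hd
  have hdlt : d < N := ZMod.val_lt _
  have hdc : ((d : ℕ) : ZMod N) = z + 1 - y := by rw [hd, ZMod.natCast_val, ZMod.cast_id]
  obtain ⟨l, hl, hcase⟩ := sAcc_bracket hσ h1 hdlt
  rcases hcase with hc | hc
  · right
    rw [invConf_true_iff]
    exact ⟨l, hl, by rw [← hc, hdc]; ring⟩
  · left
    rw [invConf_true_iff]
    refine ⟨l, hl, ?_⟩
    have : ((sAcc σ l + 1 : ℕ) : ZMod N) = z + 1 - y := by rw [← hc, hdc]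
    push_cast at this
    linear_combination -this

end inv
-- Part 8: labels and positions of the reconstructed configuration
section labels
variable {N K : ℕ} [NeZero N] [NeZero K] {σ : Conf K}
  (hσ : numParticles σ = 2 * K - N) (h1 : N < 2 * K) (h2 : K < N) (y : ZMod N)

include hσ h1 h2

lemma invConf_label (a : ℕ) (ha : a < K) :
    ((countUpTo (invConf y σ) (natRep (y + ((sAcc σ a : ℕ) : ZMod N))) : ℕ) : ZMod K)
      = ((countUpTo (invConf y σ) (natRep y) : ℕ) : ZMod K) + ((a : ℕ) : ZMod K) := by
  have hNp : numParticles (invConf y σ) = K := numParticles_invConf hσ h1 y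
  induction a with
  | zero =>
    rw [sAcc_zero]
    push_cast
    rw [add_zero, add_zero]
  | succ a ih =>
    have haK : a < K := by omega
    set x := natRep (y + ((sAcc σ a : ℕ) : ZMod N)) with hxdef
    set x' := natRep (y + ((sAcc σ (a+1) : ℕ) : ZMod N)) with hx'def
    set g := gapS σ (a + 1) with hgdef
    have hg1 : 1 ≤ g := gapS_pos _
    have hg2 : g ≤ 2 := gapS_le _
    have hN3 : 3 ≤ N := by
      have := NeZero.pos K; omega
    have hxc : ((x : ℕ) : ZMod N) = y + ((sAcc σ a : ℕ) : ZMod N) := natRep_cast _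
    have hx'c : ((x' : ℕ) : ZMod N) = y + ((sAcc σ (a+1) : ℕ) : ZMod N) := natRep_cast _
    have hcast : ((x' : ℕ) : ZMod N) = ((x : ℕ) : ZMod N) + ((g : ℕ) : ZMod N) := by
      rw [hxc, hx'c, sAcc_succ, ← hgdef]
      push_cast; ring
    have hpart : invConf y σ ((x' : ℕ) : ZMod N) = true := by
      rw [hx'c, invConf_true_iff]
      exact ⟨a + 1, ha, rfl⟩
    have hempty : ∀ t, 1 ≤ t → t < g → invConf y σ (((x + t : ℕ) : ZMod N)) = false := by
      intro t ht1 ht2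
      have ht : t = 1 := by omega
      have hgg : g = 2 := by omega
      have := invConf_gap_empty hσ h1 y haK (hgdef ▸ hgg)
      have hx1c : ((x + 1 : ℕ) : ZMod N) = y + ((sAcc σ a : ℕ) : ZMod N) + 1 := by
        have hh : ((x + 1 : ℕ) : ZMod N) = ((x : ℕ) : ZMod N) + 1 := by push_cast; ring
        rw [hh, hxc]
      rw [ht, hx1c]
      exact this
    have hstep := step_label hNp (natRep_pos _) (natRep_le _) (natRep_pos _) (natRep_le _)
      hg1 (by omega) hcast hpart hempty
    rw [← hxdef, ← hx'def] at *
    rw [hstep, ih haK]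
    push_cast; ring

lemma invConf_pos_lt (a : ℕ) (ha : a < K) :
    ((pos (invConf y σ)
        (((countUpTo (invConf y σ) (natRep y) : ℕ) : ZMod K) + ((a : ℕ) : ZMod K)) : ℕ) : ZMod N)
      = y + ((sAcc σ a : ℕ) : ZMod N) := by
  have hNp : numParticles (invConf y σ) = K := numParticles_invConf hσ h1 y
  set x := natRep (y + ((sAcc σ a : ℕ) : ZMod N)) with hxdef
  have hxc : ((x : ℕ) : ZMod N) = y + ((sAcc σ a : ℕ) : ZMod N) := natRep_cast _
  have hpart : invConf y σ ((x : ℕ) : ZMod N) = true := by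
    rw [hxc, invConf_true_iff]
    exact ⟨a, ha, rfl⟩
  obtain ⟨hL1, hL2, hL3⟩ := particle_label hNp (natRep_pos _) (natRep_le _) hpart
  have hcastL := invConf_label hσ h1 h2 y a ha
  have hrep : repOne (((countUpTo (invConf y σ) (natRep y) : ℕ) : ZMod K) + ((a : ℕ) : ZMod K))
      = countUpTo (invConf y σ) x := repOne_eq_of_cast hL1 hL2 hcastL
  rw [pos_eq_posN, hrep, hL3, hxc]

lemma invConf_pos (a : ℕ) (ha : a ≤ K) :
    ((pos (invConf y σ)
        (((countUpTo (invConf y σ) (natRep y) : ℕ) : ZMod K) + ((a : ℕ) : ZMod K)) : ℕ) : ZMod N)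
      = y + ((sAcc σ a : ℕ) : ZMod N) := by
  rcases Nat.lt_or_ge a K with haK | haK
  · exact invConf_pos_lt hσ h1 h2 y a haK
  · have haK' : a = K := by omega
    rw [haK']
    have h0 : ((K : ℕ) : ZMod K) = (0 : ZMod K) := ZMod.natCast_self K
    have hsN : sAcc σ K = N := sAcc_total hσ h1
    have hK1 : 0 < K := NeZero.pos K
    have h00 := invConf_pos_lt hσ h1 h2 y 0 hK1
    rw [h0, add_zero]
    rw [hsN, ZMod.natCast_self, add_zero]
    have : (((0 : ℕ) : ZMod K)) = (0 : ZMod K) := by push_cast; rfl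
    rw [this, add_zero] at h00
    rw [h00, sAcc_zero]
    push_cast; ring

end labels
-- Part 9: the inverse map and the two composition identities
def invMap (N K : ℕ) [NeZero N] [NeZero K] : ZMod N × Conf K → ZMod K × Conf N :=
  fun q => (((countUpTo (invConf q.1 q.2) (natRep q.1) : ℕ) : ZMod K), invConf q.1 q.2)

section comps
variable {N K : ℕ} [NeZero N] [NeZero K]

/-- right inverse, first component -/
lemma right_first {σ : Conf K} (hσ : numParticles σ = 2 * K - N) (h1 : N < 2 * K) (h2 : K < N)
    (y : ZMod N) :
    ((pos (invConf y σ)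
      ((countUpTo (invConf y σ) (natRep y) : ℕ) : ZMod K) : ℕ) : ZMod N) = y := by
  have := invConf_pos hσ h1 h2 y 0 (Nat.zero_le K)
  rw [sAcc_zero] at this
  push_cast at this
  rw [add_zero] at this
  rw [this, add_zero]

/-- right inverse, second component -/
lemma right_second {σ : Conf K} (hσ : numParticles σ = 2 * K - N) (h1 : N < 2 * K) (h2 : K < N)
    (y : ZMod N) :
    sigmaConf (invConf y σ) ((countUpTo (invConf y σ) (natRep y) : ℕ) : ZMod K) = σ := by
  set kh := ((countUpTo (invConf y σ) (natRep y) : ℕ) : ZMod K) with hkh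
  funext l
  set a := (l - 1).val with ha_def
  have haK : a < K := ZMod.val_lt _
  have hacast : ((a : ℕ) : ZMod K) = l - 1 := by
    rw [ha_def, ZMod.natCast_val, ZMod.cast_id]
  have hacast1 : (((a + 1 : ℕ)) : ZMod K) = l := by push_cast [hacast]; ring
  have hP1 := invConf_pos hσ h1 h2 y a (le_of_lt haK)
  have hP2 := invConf_pos hσ h1 h2 y (a + 1) haK
  have he1 : kh + l - 1 = kh + ((a : ℕ) : ZMod K) := by rw [hacast]; ring
  have he2 : kh + l = kh + (((a+1 : ℕ)) : ZMod K) := by rw [hacast1]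
  have hN3 : 3 ≤ N := by have := NeZero.pos K; omega
  set g := gapS σ (a + 1) with hg
  have hg1 : 1 ≤ g := gapS_pos _
  have hg2 : g ≤ 2 := gapS_le _
  have hcd : cdist ((pos (invConf y σ) (kh + l - 1) : ℕ) : ZMod N)
      ((pos (invConf y σ) (kh + l) : ℕ) : ZMod N) = g := by
    rw [he1, he2, hP1, hP2, sAcc_succ, ← hg]
    unfold cdist
    have hdiff : (y + ((sAcc σ a + g : ℕ) : ZMod N)) - (y + ((sAcc σ a : ℕ) : ZMod N))
        = ((g : ℕ) : ZMod N) := by push_cast; ring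
    rw [hdiff, ZMod.val_cast_of_lt (by omega : g < N)]
    split
    · omega
    · rfl
  show decide _ = σ l
  rw [hcd, ← hacast1]
  rcases hb : σ (((a + 1 : ℕ)) : ZMod K) with _ | _
  · have : g = 2 := by rw [hg]; unfold gapS; rw [hb]; rfl
    rw [this]; rfl
  · have : g = 1 := by rw [hg]; unfold gapS; rw [hb]; rfl
    rw [this]; rfl

/-- left inverse: reconstruction of η -/
lemma left_conf {η : Conf N} (hη : numParticles η = K) (herg : isErgodic η)
    (h1 : N < 2 * K) (h2 : K < N) (k : ZMod K) :
    invConf (((pos η k : ℕ) : ZMod N)) (sigmaConf η k) = η := by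
  set y := ((pos η k : ℕ) : ZMod N) with hy
  set σ := sigmaConf η k with hσdef
  have hC : ∀ a : ℕ, y + ((sAcc σ a : ℕ) : ZMod N) = ((pos η (k + ((a : ℕ) : ZMod K)) : ℕ) : ZMod N) := by
    intro a
    induction a with
    | zero => rw [sAcc_zero]; push_cast; rw [add_zero, add_zero]
    | succ a ih =>
      have hgap : gapS σ (a + 1) = gapD η (k + ((a : ℕ) : ZMod K)) := by
        unfold gapS
        rw [hσdef, sigmaConf_eq_gapD]
        have harg : k + (((a + 1 : ℕ)) : ZMod K) - 1 = k + ((a : ℕ) : ZMod K) := by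
          push_cast; ring
        rw [harg]
        have hDp := gapD_pos (η := η) (k + ((a : ℕ) : ZMod K))
        have hDl := gapD_le_two hη herg (k + ((a : ℕ) : ZMod K))
        interval_cases hD : gapD η (k + ((a : ℕ) : ZMod K)) <;> simp
      rw [sAcc_succ, hgap]
      have : ((sAcc σ a + gapD η (k + ((a : ℕ) : ZMod K)) : ℕ) : ZMod N)
          = ((sAcc σ a : ℕ) : ZMod N) + ((gapD η (k + ((a : ℕ) : ZMod K)) : ℕ) : ZMod N) := by
        push_cast; ring
      rw [this, ← add_assoc, ih, ← cast_add_gapD]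
      congr 1
      push_cast; ring
  funext z
  rcases hb : η z with _ | _
  · cases hb2 : invConf y σ z
    · rfl
    · exfalso
      rw [invConf_true_iff] at hb2
      obtain ⟨l, hl, rfl⟩ := hb2
      have : η (y + ((sAcc σ l : ℕ) : ZMod N)) = true := by
        rw [hC l]
        rw [(particle_iff hη _)]
        exact ⟨k + ((l : ℕ) : ZMod K), rfl⟩
      rw [this] at hb; exact absurd hb (by simp)
  · rw [(particle_iff hη z)] at hb
    obtain ⟨j, rfl⟩ := hb
    rw [invConf_true_iff]
    refine ⟨(j - k).val, ZMod.val_lt _, ?_⟩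
    rw [hC ((j - k).val)]
    have : k + (((j - k).val : ℕ) : ZMod K) = j := by
      rw [ZMod.natCast_val, ZMod.cast_id]; ring
    rw [this]

/-- left inverse, first component -/
lemma left_first {η : Conf N} (hη : numParticles η = K) (herg : isErgodic η)
    (h1 : N < 2 * K) (h2 : K < N) (k : ZMod K) :
    ((countUpTo (invConf (((pos η k : ℕ) : ZMod N)) (sigmaConf η k))
        (natRep (((pos η k : ℕ) : ZMod N))) : ℕ) : ZMod K) = k := by
  rw [left_conf hη herg h1 h2 k]
  obtain ⟨hp1, hp2, hp3⟩ : 1 ≤ pos η k ∧ pos η k ≤ N ∧ countUpTo η (pos η k) = repOne k := by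
    rw [pos_eq_posN]
    exact posN_spec hη (repOne_pos k) (repOne_le k)
  rw [natRep_cast_eq hp1 hp2, hp3, repOne_cast]

end comps

/-- **The static mapping is bijective.**  For `N ≥ 2` and `N/2 < K < N`, the map
`Φ(k,η) = (x_k(η) mod N, σ^{(k,η)})` is a bijection from `(ℤ/Kℤ) × ℰ_{N,K}` onto
`(ℤ/Nℤ) × Γ_{K,2K−N}`. -/
theorem fep_static_mapping_bijective
    (N K : ℕ) [NeZero N] [NeZero K] (hN : 2 ≤ N) (h1 : N < 2 * K) (h2 : K < N) :
    Set.BijOn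
      (fun p : ZMod K × Conf N => (((pos p.2 p.1 : ℕ) : ZMod N), sigmaConf p.2 p.1))
      ((Set.univ : Set (ZMod K)) ×ˢ {η : Conf N | numParticles η = K ∧ isErgodic η})
      ((Set.univ : Set (ZMod N)) ×ˢ {σ : Conf K | numParticles σ = 2 * K - N}) := by
  apply Set.InvOn.bijOn (f' := invMap N K)
  · constructor
    · -- LeftInvOn
      rintro ⟨k, η⟩ hp
      simp only [Set.mem_prod, Set.mem_univ, Set.mem_setOf_eq, true_and] at hp
      obtain ⟨hη, herg⟩ := hp
      unfold invMap
      simp only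
      refine Prod.ext ?_ ?_
      · exact left_first hη herg h1 h2 k
      · exact left_conf hη herg h1 h2 k
    · -- RightInvOn
      rintro ⟨y, σ⟩ hq
      simp only [Set.mem_prod, Set.mem_univ, Set.mem_setOf_eq, true_and] at hq
      unfold invMap
      simp only
      refine Prod.ext ?_ ?_
      · exact right_first hq h1 h2 y
      · exact right_second hq h1 h2 y
  · -- MapsTo forward
    rintro ⟨k, η⟩ hp
    simp only [Set.mem_prod, Set.mem_univ, Set.mem_setOf_eq, true_and] at hp ⊢
    obtain ⟨hη, herg⟩ := hp
    exact numParticles_sigmaConf hη herg h1 h2 k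
  · -- MapsTo backward
    rintro ⟨y, σ⟩ hq
    simp only [Set.mem_prod, Set.mem_univ, Set.mem_setOf_eq, true_and] at hq ⊢
    unfold invMap
    simp only
    exact ⟨numParticles_invConf hq h1 y, invConf_ergodic hq h1 y⟩

end
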